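/- arXiv:2401.08446 — 3 statements merged into one kernel-verified Lean document; each statement's English description precedes it below -/
import Mathlib

section
/- Let g : G → ℂ be a continuous compactly supported K-invariant function such that f⋆g = g⋆f (μ-almost everywhere) for every K-invariant continuous compactly supported f : G → ℂ. Then for all x, y ∈ G one has ∫_K [ g(y⁻¹(k·x)) − Δ(y⁻¹)·g((k·x)y⁻¹) ] dk = 0. -/
open MeasureTheory NNReal
open Set Function

section Helpers

/-- Parametric continuity of integrals with uniformly compact support. -/
lemma myContParam {X Y : Type*} [TopologicalSpace X] [TopologicalSpace Y]
    [MeasurableSpace Y] [OpensMeasurableSpace Y] {μ : Measure Y}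
    [IsFiniteMeasureOnCompacts μ] {f : X → Y → ℂ} {k : Set Y} (hk : IsCompact k)
    (hf : Continuous (Function.uncurry f)) (hfs : ∀ p x, x ∉ k → f p x = 0) :
    Continuous fun x => ∫ y, f x y ∂μ := by
  rw [← continuousOn_univ]
  exact continuousOn_integral_of_compact_support hk hf.continuousOn
    (fun p x _ hx => hfs p x hx)

/-- Fubini swap for jointly continuous functions with support control. -/
lemma mySwap {X Y : Type*} [TopologicalSpace X] [TopologicalSpace Y]
    [MeasurableSpace X] [MeasurableSpace Y] [OpensMeasurableSpace X]
    [OpensMeasurableSpace Y] [T2Space X] [T2Space Y]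
    {μ₁ : Measure X} {μ₂ : Measure Y} [IsFiniteMeasureOnCompacts μ₁]
    [IsFiniteMeasureOnCompacts μ₂] {F : X → Y → ℂ}
    (hF : Continuous (Function.uncurry F)) {C : Set X} {D : Set Y}
    (hC : IsCompact C) (hD : IsCompact D)
    (h0 : ∀ z t, F z t ≠ 0 → z ∈ C ∧ t ∈ D) :
    ∫ z, ∫ t, F z t ∂μ₂ ∂μ₁ = ∫ t, ∫ z, F z t ∂μ₁ ∂μ₂ := by
  apply integral_integral_swap_of_hasCompactSupport hF
  apply IsCompact.of_isClosed_subset (hC.prod hD) (isClosed_tsupport _)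
  apply closure_minimal ?_ (hC.isClosed.prod hD.isClosed)
  rintro ⟨z, t⟩ hzt
  exact h0 z t hzt

/-- If a continuous function integrates to zero against all continuous compactly
supported test functions w.r.t. a Haar measure, it vanishes. -/
lemma myTestZero {G : Type*} [Group G] [TopologicalSpace G] [IsTopologicalGroup G]
    [LocallyCompactSpace G] [T2Space G] [MeasurableSpace G] [BorelSpace G]
    (μ : Measure G) [μ.IsHaarMeasure] {u : G → ℂ} (hu : Continuous u)
    (h : ∀ φ : G → ℂ, Continuous φ → HasCompactSupport φ →
      ∫ z, φ z * u z ∂μ = 0) : ∀ z, u z = 0 := by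
  intro z₀
  obtain ⟨b, hb1, -, hbs, hb01⟩ :=
    exists_continuous_one_zero_of_isCompact (isCompact_singleton (x := z₀))
      isClosed_empty (Set.disjoint_empty _)
  set φ : G → ℂ := fun z => (starRingEnd ℂ) (u z) * (b z : ℂ) with hφ
  have hφc : Continuous φ :=
    ((Complex.continuous_conj.comp hu).mul (Complex.continuous_ofReal.comp b.continuous))
  have hφs : HasCompactSupport φ := by
    apply HasCompactSupport.mul_left
    exact hbs.comp_left (g := (Complex.ofReal)) Complex.ofReal_zero
  have h0 := h φ hφc hφs
  set r : G → ℝ := fun z => Complex.normSq (u z) * b z with hr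
  have hcast : (fun z => φ z * u z) = fun z => ((r z : ℝ) : ℂ) := by
    funext z
    simp only [hφ, hr, Complex.ofReal_mul]
    rw [mul_right_comm, mul_comm ((starRingEnd ℂ) (u z)) (u z), Complex.mul_conj]
  have hint : Integrable (fun z => φ z * u z) μ :=
    (hφc.mul hu).integrable_of_hasCompactSupport (hφs.mul_right)
  have hr0 : ∫ z, r z ∂μ = 0 := by
    have h2 := integral_re hint
    rw [h0, map_zero] at h2
    rw [← h2]
    congr 1
    funext z
    rw [congrFun hcast z]
    simp [RCLike.re_eq_complex_re]
  have hrc : Continuous r := (Complex.continuous_normSq.comp hu).mul b.continuous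
  have hrs : HasCompactSupport r := hbs.mul_left
  have hrnn : 0 ≤ r := fun z => mul_nonneg (Complex.normSq_nonneg _) (hb01 z).1
  have hae : r =ᵐ[μ] 0 :=
    (integral_eq_zero_iff_of_nonneg hrnn (hrc.integrable_of_hasCompactSupport hrs)).mp hr0
  have hre : r = 0 := (Continuous.ae_eq_iff_eq μ hrc continuous_const).mp hae
  have : Complex.normSq (u z₀) * b z₀ = 0 := congrFun hre z₀
  rw [hb1 rfl] at this
  simpa [Complex.normSq_eq_zero] using this

end Helpers

section Main

variable {G : Type*} [Group G] [TopologicalSpace G] [IsTopologicalGroup G]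
    [LocallyCompactSpace G] [T2Space G] [MeasurableSpace G] [BorelSpace G]
    (μ : Measure G) [μ.IsHaarMeasure]

/-- Right translation of Haar integrals via the modular function. -/
lemma myTranslate (Δ : G → ℝ≥0)
    (hΔ : ∀ y : G, Measure.map (fun x => x * y) μ = Δ y⁻¹ • μ)
    (F : G → ℂ) (y : G) :
    ∫ z, F (z * y) ∂μ = ((Δ y⁻¹ : ℝ) : ℂ) * ∫ z, F z ∂μ := by
  have h1 : ∫ z, F z ∂(Measure.map (fun x => x * y) μ) = ∫ z, F (z * y) ∂μ := by
    rw [← MeasurableEquiv.coe_mulRight y]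
    exact integral_map_equiv (MeasurableEquiv.mulRight y) F
  rw [← h1, hΔ y, integral_smul_nnreal_measure, NNReal.smul_def, Complex.real_smul]

variable {K : Type*} [Group K] [TopologicalSpace K] [IsTopologicalGroup K]
    [CompactSpace K] [T2Space K] [MeasurableSpace K] [BorelSpace K]
    (ν : Measure K) [ν.IsHaarMeasure] [IsProbabilityMeasure ν]
    [MulDistribMulAction K G] [ContinuousSMul K G] [SMulInvariantMeasure K G μ]

set_option linter.unusedSectionVars false

lemma avg_cont (φ : G → ℂ) (hφc : Continuous φ) :
    Continuous fun x => ∫ k, φ (k⁻¹ • x) ∂ν := by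
  apply myContParam (k := (univ : Set K)) isCompact_univ
  · exact hφc.comp ((continuous_snd.inv).smul continuous_fst)
  · intro p x hx; exact absurd (mem_univ x) hx

lemma avg_supp (φ : G → ℂ) (hφs : HasCompactSupport φ) :
    ∃ S : Set G, IsCompact S ∧ ∀ x, x ∉ S → ∀ k : K, φ (k⁻¹ • x) = 0 := by
  refine ⟨(fun p : K × G => p.1 • p.2) '' (univ ×ˢ tsupport φ),
    (isCompact_univ.prod hφs).image continuous_smul, ?_⟩
  intro x hx k
  by_contra h
  exact hx ⟨(k, k⁻¹ • x), ⟨mem_univ _, subset_tsupport _ h⟩, smul_inv_smul k x⟩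

lemma avg_hcs (φ : G → ℂ) (hφs : HasCompactSupport φ) :
    HasCompactSupport fun x => ∫ k, φ (k⁻¹ • x) ∂ν := by
  obtain ⟨S, hS, key⟩ := avg_supp (K := K) φ hφs
  exact HasCompactSupport.intro hS fun x hx => by simp [key x hx]

lemma avg_inv (φ : G → ℂ) (k₀ : K) (x : G) :
    ∫ k, φ (k⁻¹ • (k₀ • x)) ∂ν = ∫ k, φ (k⁻¹ • x) ∂ν := by
  have h := integral_mul_left_eq_self (μ := ν) (fun k => φ ((k⁻¹ * k₀) • x)) k₀
  simp only [mul_inv_rev, inv_mul_cancel_right, mul_smul] at h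
  exact h.symm

/-- If `∫ (avg φ) · w dμ = 0` for all test functions `φ`, then the `K`-average of `w`
vanishes everywhere. -/
lemma avgTest (w : G → ℂ) (hw : Continuous w)
    (h0 : ∀ φ : G → ℂ, Continuous φ → HasCompactSupport φ →
      ∫ z, (∫ k, φ (k⁻¹ • z) ∂ν) * w z ∂μ = 0) :
    ∀ z, ∫ k, w (k • z) ∂ν = 0 := by
  have hcont : Continuous fun z => ∫ k, w (k • z) ∂ν := by
    apply myContParam (k := (univ : Set K)) isCompact_univ
    · exact hw.comp (continuous_snd.smul continuous_fst)
    · intro p x hx; exact absurd (mem_univ x) hx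
  apply myTestZero μ hcont
  intro φ hφc hφs
  obtain ⟨S, hS, hSkey⟩ := avg_supp (K := K) φ hφs
  calc ∫ z, φ z * (∫ k, w (k • z) ∂ν) ∂μ
      = ∫ z, ∫ k, φ z * w (k • z) ∂ν ∂μ := by
        apply integral_congr_ae; filter_upwards with z
        exact (integral_const_mul _ _).symm
    _ = ∫ k, ∫ z, φ z * w (k • z) ∂μ ∂ν := by
        apply mySwap ?_ hφs isCompact_univ ?_
        · exact (hφc.comp continuous_fst).mul (hw.comp (continuous_snd.smul continuous_fst))
        · intro z k h
          exact ⟨subset_tsupport _ (left_ne_zero_of_mul h), mem_univ k⟩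
    _ = ∫ k, ∫ z, φ (k⁻¹ • z) * w z ∂μ ∂ν := by
        apply integral_congr_ae; filter_upwards with k
        have h := integral_smul_eq_self (μ := μ) (fun z => φ (k⁻¹ • z) * w z) (g := k)
        simp only [inv_smul_smul] at h
        exact h
    _ = ∫ z, ∫ k, φ (k⁻¹ • z) * w z ∂ν ∂μ := by
        refine (mySwap ?_ hS isCompact_univ ?_).symm
        · exact (hφc.comp ((continuous_snd.inv).smul continuous_fst)).mul
            (hw.comp continuous_fst)
        · intro z k h
          refine ⟨?_, mem_univ k⟩
          by_contra hz
          exact h (by rw [hSkey z hz k, zero_mul])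
    _ = ∫ z, (∫ k, φ (k⁻¹ • z) ∂ν) * w z ∂μ := by
        apply integral_congr_ae; filter_upwards with z
        exact integral_mul_const _ _
    _ = 0 := h0 φ hφc hφs

end Main


/-- Convolution of two complex-valued functions on a group `G` with respect to a
measure `μ` : `(f ⋆ g)(x) = ∫ f(y) g(y⁻¹ x) dμ(y)`. -/
noncomputable def convolution' {G : Type*} [Group G] [MeasurableSpace G]
    (μ : Measure G) (f g : G → ℂ) : G → ℂ :=
  fun x => ∫ y, f y * g (y⁻¹ * x) ∂μ

/-- Let `g` be a continuous compactly supported `K`-invariant function that commutes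
(a.e.) under convolution with every `K`-invariant continuous compactly supported `f`.
Then `∫_K [g(y⁻¹(k·x)) − Δ(y⁻¹) g((k·x)y⁻¹)] dk = 0` for all `x, y ∈ G`,
where `Δ` is the modular function of `G`. -/
theorem centralFunction_modular_identity
    {G : Type*} [Group G] [TopologicalSpace G] [IsTopologicalGroup G]
    [LocallyCompactSpace G] [T2Space G] [MeasurableSpace G] [BorelSpace G]
    (μ : Measure G) [μ.IsHaarMeasure]
    {K : Type*} [Group K] [TopologicalSpace K] [IsTopologicalGroup K]
    [CompactSpace K] [T2Space K] [MeasurableSpace K] [BorelSpace K]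
    (ν : Measure K) [ν.IsHaarMeasure] [IsProbabilityMeasure ν]
    [MulDistribMulAction K G] [ContinuousSMul K G] [SMulInvariantMeasure K G μ]
    -- `Δ` is the modular function of `G` : `μ(S y) = Δ(y) μ(S)`,
    -- i.e. the pushforward of `μ` under right translation by `y` is `Δ(y⁻¹) • μ`.
    (Δ : G → ℝ≥0) (hΔ : ∀ y : G, Measure.map (fun x => x * y) μ = Δ y⁻¹ • μ)
    (g : G → ℂ) (hgc : Continuous g) (hgs : HasCompactSupport g)
    (hginv : ∀ (k : K) (x : G), g (k • x) = g x)
    (hcomm : ∀ f : G → ℂ, Continuous f → HasCompactSupport f →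
      (∀ (k : K) (x : G), f (k • x) = f x) →
      convolution' μ f g =ᵐ[μ] convolution' μ g f) :
    ∀ x y : G,
      ∫ k : K, (g (y⁻¹ * (k • x)) - ((Δ y⁻¹ : ℝ) : ℂ) * g ((k • x) * y⁻¹)) ∂ν = 0 := by
  intro x₀ y₀
  set c : ℂ := ((Δ y₀⁻¹ : ℝ) : ℂ) with hc
  -- Step 1: the master identity coming from commutation with all `K`-invariant `f`.
  have S1 : ∀ f : G → ℂ, Continuous f → HasCompactSupport f →
      (∀ (k : K) (x : G), f (k • x) = f x) →
      ∀ ψ : G → ℂ, Continuous ψ → HasCompactSupport ψ →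
      ∫ t, f t * (∫ z, ψ (t * z) * g z ∂μ) ∂μ
        = ∫ t, f t * (∫ z, ψ (z * t) * g z ∂μ) ∂μ := by
    intro f hfc hfs hfinv ψ hψc hψs
    have base : ∫ x, ψ x * (∫ t, f t * g (t⁻¹ * x) ∂μ) ∂μ
        = ∫ x, ψ x * (∫ t, g t * f (t⁻¹ * x) ∂μ) ∂μ := by
      apply integral_congr_ae
      filter_upwards [hcomm f hfc hfs hfinv] with x hx
      rw [show (∫ t, f t * g (t⁻¹ * x) ∂μ) = convolution' μ f g x from rfl,
        show (∫ t, g t * f (t⁻¹ * x) ∂μ) = convolution' μ g f x from rfl, hx]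
    have lhs : ∫ x, ψ x * (∫ t, f t * g (t⁻¹ * x) ∂μ) ∂μ
        = ∫ t, f t * (∫ z, ψ (t * z) * g z ∂μ) ∂μ := by
      calc ∫ x, ψ x * (∫ t, f t * g (t⁻¹ * x) ∂μ) ∂μ
          = ∫ x, ∫ t, ψ x * (f t * g (t⁻¹ * x)) ∂μ ∂μ := by
            apply integral_congr_ae; filter_upwards with x
            exact (integral_const_mul _ _).symm
        _ = ∫ t, ∫ x, ψ x * (f t * g (t⁻¹ * x)) ∂μ ∂μ := by
            apply mySwap ?_ hψs hfs ?_
            · exact (hψc.comp continuous_fst).mul ((hfc.comp continuous_snd).mul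
                (hgc.comp ((continuous_snd.inv).mul continuous_fst)))
            · intro x t h
              exact ⟨subset_tsupport _ (left_ne_zero_of_mul h),
                subset_tsupport _ (left_ne_zero_of_mul (right_ne_zero_of_mul h))⟩
        _ = ∫ t, ∫ x, ψ (t * x) * (f t * g x) ∂μ ∂μ := by
            apply integral_congr_ae; filter_upwards with t
            have h := integral_mul_left_eq_self (μ := μ)
              (fun x => ψ x * (f t * g (t⁻¹ * x))) t
            simp only [inv_mul_cancel_left] at h
            exact h.symm
        _ = ∫ t, f t * (∫ z, ψ (t * z) * g z ∂μ) ∂μ := by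
            apply integral_congr_ae; filter_upwards with t
            rw [← integral_const_mul]
            apply integral_congr_ae; filter_upwards with z
            ring
    have rhs : ∫ x, ψ x * (∫ t, g t * f (t⁻¹ * x) ∂μ) ∂μ
        = ∫ t, f t * (∫ z, ψ (z * t) * g z ∂μ) ∂μ := by
      calc ∫ x, ψ x * (∫ t, g t * f (t⁻¹ * x) ∂μ) ∂μ
          = ∫ x, ∫ t, ψ x * (g t * f (t⁻¹ * x)) ∂μ ∂μ := by
            apply integral_congr_ae; filter_upwards with x
            exact (integral_const_mul _ _).symm
        _ = ∫ t, ∫ x, ψ x * (g t * f (t⁻¹ * x)) ∂μ ∂μ := by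
            apply mySwap ?_ hψs hgs ?_
            · exact (hψc.comp continuous_fst).mul ((hgc.comp continuous_snd).mul
                (hfc.comp ((continuous_snd.inv).mul continuous_fst)))
            · intro x t h
              exact ⟨subset_tsupport _ (left_ne_zero_of_mul h),
                subset_tsupport _ (left_ne_zero_of_mul (right_ne_zero_of_mul h))⟩
        _ = ∫ t, ∫ x, ψ (t * x) * (g t * f x) ∂μ ∂μ := by
            apply integral_congr_ae; filter_upwards with t
            have h := integral_mul_left_eq_self (μ := μ)
              (fun x => ψ x * (g t * f (t⁻¹ * x))) t
            simp only [inv_mul_cancel_left] at h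
            exact h.symm
        _ = ∫ x, ∫ t, ψ (t * x) * (g t * f x) ∂μ ∂μ := by
            apply mySwap ?_ hgs hfs ?_
            · exact (hψc.comp (continuous_fst.mul continuous_snd)).mul
                ((hgc.comp continuous_fst).mul (hfc.comp continuous_snd))
            · intro t x h
              exact ⟨subset_tsupport _ (left_ne_zero_of_mul (right_ne_zero_of_mul h)),
                subset_tsupport _ (right_ne_zero_of_mul (right_ne_zero_of_mul h))⟩
        _ = ∫ t, f t * (∫ z, ψ (z * t) * g z ∂μ) ∂μ := by
            apply integral_congr_ae; filter_upwards with x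
            rw [← integral_const_mul]
            apply integral_congr_ae; filter_upwards with t
            ring
    rw [← lhs, ← rhs]; exact base
  -- Continuity of the two convolution-type integrals.
  have hA : ∀ ψ : G → ℂ, Continuous ψ →
      Continuous fun t => ∫ z, ψ (t * z) * g z ∂μ := by
    intro ψ hψc
    apply myContParam (k := tsupport g) hgs
    · exact (hψc.comp (continuous_fst.mul continuous_snd)).mul (hgc.comp continuous_snd)
    · intro t z hz
      rw [image_eq_zero_of_notMem_tsupport hz, mul_zero]
  have hB : ∀ ψ : G → ℂ, Continuous ψ →
      Continuous fun t => ∫ z, ψ (z * t) * g z ∂μ := by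
    intro ψ hψc
    apply myContParam (k := tsupport g) hgs
    · exact (hψc.comp (continuous_snd.mul continuous_fst)).mul (hgc.comp continuous_snd)
    · intro t z hz
      rw [image_eq_zero_of_notMem_tsupport hz, mul_zero]
  -- Step 2: the `K`-average of `Aψ - Bψ` vanishes, for every test function `ψ`.
  have stepE : ∀ ψ : G → ℂ, Continuous ψ → HasCompactSupport ψ → ∀ t : G,
      ∫ k, ((∫ z, ψ ((k • t) * z) * g z ∂μ) - (∫ z, ψ (z * (k • t)) * g z ∂μ)) ∂ν = 0 := by
    intro ψ hψc hψs
    apply avgTest μ ν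
      (fun t => (∫ z, ψ (t * z) * g z ∂μ) - (∫ z, ψ (z * t) * g z ∂μ))
      ((hA ψ hψc).sub (hB ψ hψc))
    intro φ hφc hφs
    have havgc := avg_cont (ν := ν) φ hφc
    have havgs := avg_hcs (ν := ν) φ hφs
    have hs1 := S1 _ havgc havgs (avg_inv (ν := ν) φ) ψ hψc hψs
    have iA : Integrable (fun z => (∫ k, φ (k⁻¹ • z) ∂ν) * (∫ u, ψ (z * u) * g u ∂μ)) μ :=
      (havgc.mul (hA ψ hψc)).integrable_of_hasCompactSupport havgs.mul_right
    have iB : Integrable (fun z => (∫ k, φ (k⁻¹ • z) ∂ν) * (∫ u, ψ (u * z) * g u ∂μ)) μ :=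
      (havgc.mul (hB ψ hψc)).integrable_of_hasCompactSupport havgs.mul_right
    calc ∫ z, (∫ k, φ (k⁻¹ • z) ∂ν) *
          ((∫ u, ψ (z * u) * g u ∂μ) - (∫ u, ψ (u * z) * g u ∂μ)) ∂μ
        = ∫ z, ((∫ k, φ (k⁻¹ • z) ∂ν) * (∫ u, ψ (z * u) * g u ∂μ)
            - (∫ k, φ (k⁻¹ • z) ∂ν) * (∫ u, ψ (u * z) * g u ∂μ)) ∂μ := by
          apply integral_congr_ae; filter_upwards with z; ring
      _ = (∫ z, (∫ k, φ (k⁻¹ • z) ∂ν) * (∫ u, ψ (z * u) * g u ∂μ) ∂μ)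
            - ∫ z, (∫ k, φ (k⁻¹ • z) ∂ν) * (∫ u, ψ (u * z) * g u ∂μ) ∂μ :=
          integral_sub iA iB
      _ = 0 := by rw [hs1, sub_self]
  -- Step 3: for `K`-invariant `f`, `∫ f(y₀ z) g(z) = ∫ f(z y₀) g(z)`.
  have star : ∀ f : G → ℂ, Continuous f → HasCompactSupport f →
      (∀ (k : K) (x : G), f (k • x) = f x) →
      ∫ z, f (y₀ * z) * g z ∂μ = ∫ z, f (z * y₀) * g z ∂μ := by
    intro f hfc hfs hfinv
    have h := stepE f hfc hfs y₀
    have hconst : ∀ k : K,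
        ((∫ z, f ((k • y₀) * z) * g z ∂μ) - (∫ z, f (z * (k • y₀)) * g z ∂μ))
          = ((∫ z, f (y₀ * z) * g z ∂μ) - (∫ z, f (z * y₀) * g z ∂μ)) := by
      intro k
      have h1 : ∫ z, f ((k • y₀) * z) * g z ∂μ = ∫ z, f (y₀ * z) * g z ∂μ := by
        have h2 := integral_smul_eq_self (μ := μ) (fun z => f ((k • y₀) * z) * g z) (g := k)
        rw [← h2]
        apply integral_congr_ae; filter_upwards with z
        rw [← smul_mul', hfinv, hginv]
      have h3 : ∫ z, f (z * (k • y₀)) * g z ∂μ = ∫ z, f (z * y₀) * g z ∂μ := by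
        have h4 := integral_smul_eq_self (μ := μ) (fun z => f (z * (k • y₀)) * g z) (g := k)
        rw [← h4]
        apply integral_congr_ae; filter_upwards with z
        rw [← smul_mul', hfinv, hginv]
      rw [h1, h3]
    rw [integral_congr_ae (Filter.Eventually.of_forall hconst), integral_const] at h
    simp only [measure_univ, ENNReal.toReal_one, probReal_univ, one_smul] at h
    exact sub_eq_zero.mp h
  -- Step 4: insert the modular function.
  have E' : ∀ f : G → ℂ, Continuous f → HasCompactSupport f →
      (∀ (k : K) (x : G), f (k • x) = f x) →
      ∫ z, f z * (g (y₀⁻¹ * z) - c * g (z * y₀⁻¹)) ∂μ = 0 := by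
    intro f hfc hfs hfinv
    have hstar := star f hfc hfs hfinv
    have hL : ∫ z, f z * g (y₀⁻¹ * z) ∂μ = ∫ z, f (y₀ * z) * g z ∂μ := by
      have h := integral_mul_left_eq_self (μ := μ) (fun z => f (y₀ * z) * g z) y₀⁻¹
      rw [← h]
      apply integral_congr_ae; filter_upwards with z
      rw [mul_inv_cancel_left]
    have hR : ∫ z, f (z * y₀) * g z ∂μ = c * ∫ z, f z * g (z * y₀⁻¹) ∂μ := by
      have h := myTranslate μ Δ hΔ (fun z => f z * g (z * y₀⁻¹)) y₀
      rw [← h]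
      apply integral_congr_ae; filter_upwards with z
      rw [mul_inv_cancel_right]
    have iL : Integrable (fun z => f z * g (y₀⁻¹ * z)) μ :=
      (hfc.mul (hgc.comp (continuous_const.mul continuous_id))).integrable_of_hasCompactSupport
        hfs.mul_right
    have iR : Integrable (fun z => f z * (c * g (z * y₀⁻¹))) μ :=
      (hfc.mul (continuous_const.mul
        (hgc.comp (continuous_id.mul continuous_const)))).integrable_of_hasCompactSupport
        hfs.mul_right
    calc ∫ z, f z * (g (y₀⁻¹ * z) - c * g (z * y₀⁻¹)) ∂μ
        = ∫ z, (f z * g (y₀⁻¹ * z) - f z * (c * g (z * y₀⁻¹))) ∂μ := by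
          apply integral_congr_ae; filter_upwards with z; ring
      _ = (∫ z, f z * g (y₀⁻¹ * z) ∂μ) - ∫ z, f z * (c * g (z * y₀⁻¹)) ∂μ :=
          integral_sub iL iR
      _ = 0 := by
          have hpull : ∫ z, f z * (c * g (z * y₀⁻¹)) ∂μ
              = c * ∫ z, f z * g (z * y₀⁻¹) ∂μ := by
            rw [← integral_const_mul]
            apply integral_congr_ae; filter_upwards with z; ring
          rw [hL, hstar, hR, hpull, sub_self]
  -- Step 5: conclude by averaging over `K`.
  have final := avgTest μ ν (fun z => g (y₀⁻¹ * z) - c * g (z * y₀⁻¹))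
    ((hgc.comp (continuous_const.mul continuous_id)).sub
      (continuous_const.mul (hgc.comp (continuous_id.mul continuous_const))))
    (fun φ hφc hφs => E' _ (avg_cont (ν := ν) φ hφc)
      (avg_hcs (ν := ν) φ hφs) (avg_inv (ν := ν) φ)) x₀
  simpa using final
end

section
/- If (G,K) is a quasi-Gelfand pair of order p, then for all x₁, x₂, …, x_{p+1} ∈ G there exist m ∈ {1,…,p} and a permutation σ of {1,…,p+1} satisfying σ(m) = p+1, σ(1) < σ(2) < … < σ(m), and σ(m+1) > σ(m+2) > … > σ(p+1), such that the product x₁x₂⋯x_{p+1} belongs to the set product (K·x_{σ(1)})(K·x_{σ(2)})⋯(K·x_{σ(p+1)}), where K·x = {k·x : k ∈ K} denotes the K-orbit of x and the product of subsets A₁⋯A_q of G is {a₁⋯a_q : aᵢ ∈ Aᵢ}. -/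
open MeasureTheory Pointwise
set_option linter.unusedSectionVars false
set_option linter.unusedVariables false

/-- The iterated Lie bracket `[f₁, [f₂, …, [f_q, g]…]]` where the bracket is
`[f, h] = f ⋆ h - h ⋆ f`, `l = [f₁, …, f_q]`. -/
noncomputable def iterBracket {G : Type*} [Group G] [MeasurableSpace G]
    (μ : Measure G) (l : List (G → ℂ)) (g : G → ℂ) : G → ℂ :=
  l.foldr (fun f h => convolution' μ f h - convolution' μ h f) g

/-- The words appearing in the expansion of an iterated bracket. -/
def brWords {α : Type*} : List α → α → List (List α)
  | [], g => [[g]]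
  | f :: l, g => ((brWords l g).map (f :: ·)) ++ ((brWords l g).map (· ++ [f]))

lemma brWords_head {α : Type*} : ∀ (l : List α) (g : α),
    ∃ t, brWords l g = (l ++ [g]) :: t
  | [], g => ⟨[], rfl⟩
  | f :: l, g => by
    obtain ⟨t, ht⟩ := brWords_head l g
    exact ⟨(t.map (f :: ·)) ++ ((brWords l g).map (· ++ [f])), by
      simp [brWords, ht]⟩

section Aux

variable {G : Type*} [Group G] [TopologicalSpace G] [IsTopologicalGroup G]
    [LocallyCompactSpace G] [T2Space G] [MeasurableSpace G] [BorelSpace G]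
    (μ : Measure G) [μ.IsHaarMeasure]

noncomputable def rconv' (f g : G → ℝ) : G → ℝ := fun x => ∫ y, f y * g (y⁻¹ * x) ∂μ

noncomputable def rchain (l : List (G → ℝ)) (g : G → ℝ) : G → ℝ := l.foldr (rconv' μ) g

noncomputable def rbracket (l : List (G → ℝ)) (g : G → ℝ) : G → ℝ :=
  l.foldr (fun f h => rconv' μ f h - rconv' μ h f) g

@[simp] lemma rchain_nil (g : G → ℝ) : rchain μ [] g = g := rfl
@[simp] lemma rchain_cons (f : G → ℝ) (l : List (G → ℝ)) (g : G → ℝ) :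
    rchain μ (f :: l) g = rconv' μ f (rchain μ l g) := rfl
@[simp] lemma rbracket_nil (g : G → ℝ) : rbracket μ [] g = g := rfl
@[simp] lemma rbracket_cons (f : G → ℝ) (l : List (G → ℝ)) (g : G → ℝ) :
    rbracket μ (f :: l) g =
      rconv' μ f (rbracket μ l g) - rconv' μ (rbracket μ l g) f := rfl

variable {ι : Type*} (F : ι → G → ℝ) (L : ι → Set G)

lemma rconv'_support {f g : G → ℝ} {x : G} (h : rconv' μ f g x ≠ 0) :
    x ∈ Function.support f * Function.support g := by
  by_contra hx
  apply h
  have h0 : ∀ y, f y * g (y⁻¹ * x) = 0 := by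
    intro y
    by_contra hy
    have hf : y ∈ Function.support f := fun h0 => hy (by simp [h0])
    have hg : (y⁻¹ * x) ∈ Function.support g := fun h0 => hy (by simp [h0])
    exact hx (by simpa [mul_inv_cancel_left] using Set.mul_mem_mul hf hg)
  simp [rconv', h0]

lemma rbracket_support (hFL : ∀ i, Function.support (F i) ⊆ L i) :
    ∀ (l : List ι) (g0 : ι) (w : G), rbracket μ (l.map F) (F g0) w ≠ 0 →
      ∃ u ∈ brWords l g0, w ∈ (u.map L).prod
  | [], g0, w => by
    intro hw
    refine ⟨[g0], by simp [brWords], ?_⟩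
    simpa using hFL g0 hw
  | i :: l, g0, w => by
    intro hw
    have : rconv' μ (F i) (rbracket μ (l.map F) (F g0)) w ≠ 0 ∨
        rconv' μ (rbracket μ (l.map F) (F g0)) (F i) w ≠ 0 := by
      by_contra hc
      push_neg at hc
      apply hw
      simp only [List.map_cons, rbracket_cons, Pi.sub_apply, hc.1, hc.2, sub_zero]
    rcases this with h1 | h1
    · obtain ⟨a, ha, b, hb, hab⟩ := rconv'_support μ h1
      obtain ⟨u, hu, hbu⟩ := rbracket_support hFL l g0 b hb
      refine ⟨i :: u, ?_, ?_⟩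
      · exact List.mem_append_left _ (List.mem_map_of_mem hu)
      · rw [← hab]
        simpa [List.prod_cons] using Set.mul_mem_mul (hFL i ha) hbu
    · obtain ⟨a, ha, b, hb, hab⟩ := rconv'_support μ h1
      obtain ⟨u, hu, hau⟩ := rbracket_support hFL l g0 a ha
      refine ⟨u ++ [i], ?_, ?_⟩
      · exact List.mem_append_right _ (List.mem_map_of_mem hu)
      · rw [← hab]
        simpa [List.prod_append] using Set.mul_mem_mul hau (hFL i hb)

lemma rbracket_eq_rchain (hFL : ∀ i, Function.support (F i) ⊆ L i) :
    ∀ (l : List ι) (g0 : ι) (w : G),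
      (∀ u ∈ (brWords l g0).tail, w ∉ (u.map L).prod) →
      rbracket μ (l.map F) (F g0) w = rchain μ (l.map F) (F g0) w
  | [], g0, w => fun _ => rfl
  | i :: l, g0, w => by
    intro hw
    obtain ⟨t, ht⟩ := brWords_head l g0
    have htail : (brWords (i :: l) g0).tail
        = (t.map (i :: ·)) ++ ((brWords l g0).map (· ++ [i])) := by
      simp [brWords, ht]
    have hmem1 : ∀ u ∈ (brWords l g0).tail, (i :: u) ∈ (brWords (i :: l) g0).tail := by
      intro u hu
      rw [htail]
      apply List.mem_append_left
      apply List.mem_map_of_mem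
      rw [ht] at hu; exact hu
    have hmem2 : ∀ u ∈ brWords l g0, (u ++ [i]) ∈ (brWords (i :: l) g0).tail := by
      intro u hu
      rw [htail]
      exact List.mem_append_right _ (List.mem_map_of_mem hu)
    simp only [List.map_cons, rbracket_cons, rchain_cons, Pi.sub_apply]
    have hterm2 : rconv' μ (rbracket μ (l.map F) (F g0)) (F i) w = 0 := by
      rw [rconv']
      have h0 : ∀ y : G, rbracket μ (l.map F) (F g0) y * F i (y⁻¹ * w) = 0 := by
        intro y
        by_contra hy
        have hb : rbracket μ (l.map F) (F g0) y ≠ 0 := fun h0 => hy (by simp [h0])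
        have hfi : (y⁻¹ * w) ∈ Function.support (F i) := fun h0 => hy (by simp [h0])
        obtain ⟨u, hu, hyu⟩ := rbracket_support μ F L hFL l g0 y hb
        apply hw _ (hmem2 u hu)
        have : w ∈ ((u.map L).prod) * L i := by
          have := Set.mul_mem_mul hyu (hFL i hfi)
          simpa [mul_inv_cancel_left] using this
        simpa [List.prod_append] using this
      simp [h0]
    rw [hterm2, sub_zero]
    have hterm1 : rconv' μ (F i) (rbracket μ (l.map F) (F g0)) w
        = rconv' μ (F i) (rchain μ (l.map F) (F g0)) w := by
      rw [rconv', rconv']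
      apply integral_congr_ae
      apply Filter.Eventually.of_forall
      intro y
      rcases eq_or_ne (F i y) 0 with h0 | h0
      · simp [h0]
      · dsimp only
        congr 1
        apply rbracket_eq_rchain hFL l g0 (y⁻¹ * w)
        intro u hu hyu
        apply hw _ (hmem1 u hu)
        have : w ∈ L i * (u.map L).prod := by
          have := Set.mul_mem_mul (hFL i h0) hyu
          simpa [mul_inv_cancel_left] using this
        simpa [List.prod_cons] using this
    rw [hterm1]

lemma rconv'_nonneg {f g : G → ℝ} (hf : ∀ x, 0 ≤ f x) (hg : ∀ x, 0 ≤ g x) (x : G) :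
    0 ≤ rconv' μ f g x :=
  integral_nonneg fun y => mul_nonneg (hf y) (hg _)

lemma rconv'_continuous {f g : G → ℝ} (hf : Continuous f) (hfc : HasCompactSupport f)
    (hg : Continuous g) : Continuous (rconv' μ f g) := by
  rw [← continuousOn_univ]
  apply continuousOn_integral_of_compact_support (hfc : IsCompact (tsupport f))
  · apply Continuous.continuousOn
    exact (hf.comp continuous_snd).mul
      (hg.comp ((continuous_snd.inv).mul continuous_fst))
  · intro p y _ hy
    simp [image_eq_zero_of_notMem_tsupport hy]

lemma rconv'_hasCompactSupport {f g : G → ℝ} (hfc : HasCompactSupport f)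
    (hgc : HasCompactSupport g) : HasCompactSupport (rconv' μ f g) := by
  have : Function.support (rconv' μ f g) ⊆ tsupport f * tsupport g := by
    intro x hx
    exact Set.mul_subset_mul (subset_tsupport f) (subset_tsupport g) (rconv'_support μ hx)
  apply HasCompactSupport.of_support_subset_isCompact (hfc.mul hgc) this

lemma rconv'_integrable {f g : G → ℝ} (hf : Continuous f) (hfc : HasCompactSupport f)
    (hg : Continuous g) (hgc : HasCompactSupport g) : Integrable (rconv' μ f g) μ :=
  (rconv'_continuous μ hf hfc hg).integrable_of_hasCompactSupport
    (rconv'_hasCompactSupport μ hfc hgc)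

lemma rconv'_pos {f g : G → ℝ} (hf : Continuous f) (hfc : HasCompactSupport f)
    (hg : Continuous g) (hf0 : ∀ x, 0 ≤ f x) (hg0 : ∀ x, 0 ≤ g x)
    {a b : G} (hfa : 0 < f a) (hgb : 0 < g b) : 0 < rconv' μ f g (a * b) := by
  have hcont : Continuous fun y => f y * g (y⁻¹ * (a * b)) :=
    hf.mul (hg.comp ((continuous_inv).mul continuous_const))
  have hint : Integrable (fun y => f y * g (y⁻¹ * (a * b))) μ := by
    apply hcont.integrable_of_hasCompactSupport
    apply HasCompactSupport.of_support_subset_isCompact hfc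
    intro y hy
    apply subset_tsupport f
    intro h0
    exact hy (by simp [h0])
  rw [rconv']
  rw [integral_pos_iff_support_of_nonneg_ae
      (Filter.Eventually.of_forall fun y => mul_nonneg (hf0 y) (hg0 _)) hint]
  have hopen : IsOpen (Function.support fun y => f y * g (y⁻¹ * (a * b))) := by
    have : Function.support (fun y => f y * g (y⁻¹ * (a * b)))
        = (fun y => f y * g (y⁻¹ * (a * b))) ⁻¹' {0}ᶜ := by
      ext y; simp [Function.mem_support]
    rw [this]
    exact hcont.isOpen_preimage _ (isOpen_compl_singleton)
  apply hopen.measure_pos μ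
  exact ⟨a, by simp [Function.mem_support]; constructor <;> [exact ne_of_gt hfa; exact ne_of_gt (by simpa using hgb)]⟩




def IsBump (f : G → ℝ) : Prop := Continuous f ∧ HasCompactSupport f ∧ ∀ x, 0 ≤ f x

lemma rchain_isBump : ∀ (l : List (G → ℝ)), (∀ f ∈ l, IsBump f) →
    ∀ g : G → ℝ, IsBump g → IsBump (rchain μ l g)
  | [], _, g, hg => hg
  | f :: l, hl, g, hg => by
    have hf : IsBump f := hl f (List.mem_cons_self)
    have hrest : IsBump (rchain μ l g) :=
      rchain_isBump l (fun f' hf' => hl f' (List.mem_cons_of_mem _ hf')) g hg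
    exact ⟨rconv'_continuous μ hf.1 hf.2.1 hrest.1,
      rconv'_hasCompactSupport μ hf.2.1 hrest.2.1,
      rconv'_nonneg μ hf.2.2 hrest.2.2⟩

lemma rchain_pos : ∀ (l : List (G → ℝ)) (as : List G),
    List.Forall₂ (fun f a => 0 < f a) l as → (∀ f ∈ l, IsBump f) →
    ∀ (g : G → ℝ) (b : G), IsBump g → 0 < g b → 0 < rchain μ l g (as.prod * b)
  | [], [], _, _, g, b, hg, hgb => by simpa using hgb
  | f :: l, a :: as, h2, hl, g, b, hg, hgb => by
    have hf : IsBump f := hl f (List.mem_cons_self)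
    have hl' : ∀ f' ∈ l, IsBump f' := fun f' hf' => hl f' (List.mem_cons_of_mem _ hf')
    rcases List.forall₂_cons.1 h2 with ⟨hfa, h2'⟩
    have hrest : IsBump (rchain μ l g) := rchain_isBump μ l hl' g hg
    have hpos : 0 < rchain μ l g (as.prod * b) := rchain_pos l as h2' hl' g b hg hgb
    have : (a :: as).prod * b = a * (as.prod * b) := by
      rw [List.prod_cons, mul_assoc]
    rw [this, rchain_cons]
    exact rconv'_pos μ hf.1 hf.2.1 hrest.1 hf.2.2 hrest.2.2 hfa hpos

lemma convolution'_ofReal (f g : G → ℝ) :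
    convolution' μ (fun x => (f x : ℂ)) (fun x => (g x : ℂ))
      = fun x => ((rconv' μ f g x : ℝ) : ℂ) := by
  funext x
  show ∫ y, ((f y : ℂ) * (g (y⁻¹ * x) : ℂ)) ∂μ = _
  have : ∀ y : G, ((f y : ℂ) * (g (y⁻¹ * x) : ℂ)) = ((f y * g (y⁻¹ * x) : ℝ) : ℂ) := by
    intro y; norm_cast
  rw [show (fun y => ((f y : ℂ) * (g (y⁻¹ * x) : ℂ))) = fun y => ((f y * g (y⁻¹ * x) : ℝ) : ℂ) from funext this]
  exact integral_ofReal

lemma iterBracket_ofReal : ∀ (l : List (G → ℝ)) (g : G → ℝ),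
    iterBracket μ (l.map (fun f => fun x => ((f x : ℝ) : ℂ))) (fun x => ((g x : ℝ) : ℂ))
      = fun x => ((rbracket μ l g x : ℝ) : ℂ)
  | [], g => rfl
  | f :: l, g => by
    show convolution' μ _ (iterBracket μ (l.map (fun f => fun x => ((f x : ℝ) : ℂ))) (fun x => ((g x : ℝ) : ℂ)))
      - convolution' μ (iterBracket μ (l.map (fun f => fun x => ((f x : ℝ) : ℂ))) (fun x => ((g x : ℝ) : ℂ))) _ = _
    rw [iterBracket_ofReal l g, convolution'_ofReal, convolution'_ofReal]
    funext x
    simp only [Pi.sub_apply, rbracket_cons]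
    push_cast
    ring


lemma listSet_prod_compact : ∀ (l : List (Set G)), (∀ s ∈ l, IsCompact s) → IsCompact l.prod
  | [], _ => by
    rw [List.prod_nil, ← Set.singleton_one]
    exact isCompact_singleton
  | s :: l, h => by
    rw [List.prod_cons]
    exact (h s (List.mem_cons_self)).mul
      (listSet_prod_compact l (fun t ht => h t (List.mem_cons_of_mem _ ht)))

lemma listSet_prod_mono {ι : Type*} (U U' : ι → Set G) :
    ∀ (w : List ι), (∀ i ∈ w, U i ⊆ U' i) → (w.map U).prod ⊆ (w.map U').prod
  | [], _ => by simp
  | i :: w, h => by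
    simp only [List.map_cons, List.prod_cons]
    exact Set.mul_subset_mul (h i (List.mem_cons_self))
      (listSet_prod_mono U U' w (fun j hj => h j (List.mem_cons_of_mem _ hj)))

lemma tube_word {ι : Type*} [DecidableEq ι] (C : ι → Set G) (hC : ∀ i, IsCompact (C i)) :
    ∀ (w : List ι) (V : Set G), IsOpen V → (w.map C).prod ⊆ V →
      ∃ U : ι → Set G, (∀ i, IsOpen (U i) ∧ C i ⊆ U i) ∧ (w.map U).prod ⊆ V
  | [], V, hV, hsub => ⟨fun _ => Set.univ, fun i => ⟨isOpen_univ, Set.subset_univ _⟩, by simpa using hsub⟩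
  | i :: w, V, hV, hsub => by
    have hB : IsCompact ((w.map C).prod) := by
      apply listSet_prod_compact
      intro s hs
      obtain ⟨j, _, rfl⟩ := List.mem_map.1 hs
      exact hC j
    have hn : IsOpen ((fun pq : G × G => pq.1 * pq.2) ⁻¹' V) :=
      hV.preimage (continuous_fst.mul continuous_snd)
    have hp : (C i) ×ˢ ((w.map C).prod) ⊆ (fun pq : G × G => pq.1 * pq.2) ⁻¹' V := by
      rintro ⟨a, b⟩ ⟨ha, hb⟩
      apply hsub
      rw [List.map_cons, List.prod_cons]
      exact Set.mul_mem_mul ha hb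
    obtain ⟨u, v, hu, hv, hCu, hBv, huv⟩ := generalized_tube_lemma (hC i) hB hn hp
    obtain ⟨U', hU', hU'v⟩ := tube_word C hC w v hv hBv
    refine ⟨fun j => if j = i then U' j ∩ u else U' j, ?_, ?_⟩
    · intro j
      by_cases hj : j = i
      · subst hj
        simp only [if_pos rfl]
        exact ⟨(hU' j).1.inter hu, Set.subset_inter (hU' j).2 hCu⟩
      · simp only [if_neg hj]
        exact hU' j
    · rw [List.map_cons, List.prod_cons]
      intro z hz
      obtain ⟨a, ha, b, hb, rfl⟩ := hz
      have ha' : a ∈ u := by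
        simp only [if_pos rfl] at ha
        exact ha.2
      have hb' : b ∈ v := by
        apply hU'v
        refine listSet_prod_mono _ U' w (fun j _ => ?_) hb
        by_cases hj : j = i
        · rw [if_pos hj]; exact Set.inter_subset_left
        · rw [if_neg hj]
      exact huv (Set.mk_mem_prod ha' hb')

lemma tube_words {ι : Type*} [DecidableEq ι] (C : ι → Set G) (hC : ∀ i, IsCompact (C i)) (z : G) :
    ∀ (ws : List (List ι)), (∀ w ∈ ws, z ∉ (w.map C).prod) →
      ∃ U : ι → Set G, (∀ i, IsOpen (U i) ∧ C i ⊆ U i) ∧ ∀ w ∈ ws, z ∉ (w.map U).prod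
  | [], _ => ⟨fun _ => Set.univ, fun i => ⟨isOpen_univ, Set.subset_univ _⟩, by simp⟩
  | w :: ws, h => by
    obtain ⟨U₁, hU₁, hU₁w⟩ := tube_word C hC w ({z}ᶜ) (isClosed_singleton.isOpen_compl)
      (fun t ht hz => h w (List.mem_cons_self) (hz ▸ ht))
    obtain ⟨U₂, hU₂, hU₂w⟩ := tube_words C hC z ws (fun w' hw' => h w' (List.mem_cons_of_mem _ hw'))
    refine ⟨fun i => U₁ i ∩ U₂ i, fun i => ⟨(hU₁ i).1.inter (hU₂ i).1,
      Set.subset_inter (hU₁ i).2 (hU₂ i).2⟩, ?_⟩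
    intro w' hw'
    rcases List.mem_cons.1 hw' with rfl | hw'
    · intro hz
      exact hU₁w (listSet_prod_mono _ U₁ w' (fun j _ => Set.inter_subset_left) hz) rfl
    · intro hz
      exact hU₂w w' hw' (listSet_prod_mono _ U₂ w' (fun j _ => Set.inter_subset_right) hz)

lemma isOpen_avoid {ι : Type*} (L : ι → Set G) (hL : ∀ i, IsCompact (L i)) :
    ∀ ws : List (List ι), IsOpen {w : G | ∀ u ∈ ws, w ∉ (u.map L).prod}
  | [] => by
    have : {w : G | ∀ u ∈ ([] : List (List ι)), w ∉ (u.map L).prod} = Set.univ := by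
      ext w; simp
    rw [this]; exact isOpen_univ
  | u :: ws => by
    have heq : {w : G | ∀ v ∈ u :: ws, w ∉ (v.map L).prod}
        = ((u.map L).prod)ᶜ ∩ {w | ∀ v ∈ ws, w ∉ (v.map L).prod} := by
      ext w
      simp only [Set.mem_setOf_eq, List.forall_mem_cons, Set.mem_inter_iff, Set.mem_compl_iff]
    rw [heq]
    have hcpt : IsCompact ((u.map L).prod) := by
      apply listSet_prod_compact
      intro s hs
      obtain ⟨j, _, rfl⟩ := List.mem_map.1 hs
      exact hL j
    exact (hcpt.isClosed.isOpen_compl).inter (isOpen_avoid L hL ws)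

end Aux

lemma forall₂_map_map {ι α β : Type*} (R : α → β → Prop) (f : ι → α) (g : ι → β) :
    ∀ l : List ι, (∀ i ∈ l, R (f i) (g i)) → List.Forall₂ R (l.map f) (l.map g)
  | [], _ => List.Forall₂.nil
  | i :: l, h => List.Forall₂.cons (h i (List.mem_cons_self))
      (forall₂_map_map R f g l fun j hj => h j (List.mem_cons_of_mem _ hj))

section Comb

variable {p : ℕ}

def qgBase (p : ℕ) : List (Fin (p + 1)) := (List.finRange p).map Fin.castSucc

lemma qgBase_length : (qgBase p).length = p := by simp [qgBase]

lemma qgBase_sorted : (qgBase p).Pairwise (· < ·) := by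
  apply List.Pairwise.map
  · intro a b hab
    exact hab
  · exact (List.pairwise_lt_finRange p).imp (fun h => by
      simpa [Fin.castSucc_lt_castSucc_iff] using h)

lemma qgBase_lt_last : ∀ j ∈ qgBase p, j < Fin.last p := by
  intro j hj
  obtain ⟨i, _, rfl⟩ := List.mem_map.1 hj
  exact Fin.castSucc_lt_last i

lemma qgBase_nodup : (qgBase p).Nodup :=
  (List.nodup_finRange p).map (Fin.castSucc_injective p)


lemma getElem_of_append_right {α : Type*} {u A B' : List α} (h : u = A ++ B') {k : ℕ}
    (hk : A.length ≤ k) (hk2 : k < u.length) :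
    u[k]'hk2 = B'[k - A.length]'(by subst h; simp only [List.length_append] at hk2; omega) := by
  subst h
  rw [List.getElem_append_right hk]

lemma getElem_of_append_left {α : Type*} {u A B' : List α} (h : u = A ++ B') {k : ℕ}
    (hk : k < A.length) (hk2 : k < u.length) :
    u[k]'hk2 = A[k]'hk := by
  subst h
  rw [List.getElem_append_left hk]

lemma exists_perm_of_word (A B : List (Fin (p + 1)))
    (hA : A.Sublist (qgBase p)) (hB : B.Sublist (qgBase p))
    (hAB : (A ++ B).Perm (qgBase p)) (hAne : A ≠ qgBase p) :
    ∃ m : ℕ, 1 ≤ m ∧ m ≤ p ∧ ∃ σ : Equiv.Perm (Fin (p + 1)),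
      (∀ i : Fin (p + 1), (i : ℕ) + 1 = m → σ i = Fin.last p) ∧
      (∀ i j : Fin (p + 1), (i : ℕ) < (j : ℕ) → (j : ℕ) < m → σ i < σ j) ∧
      (∀ i j : Fin (p + 1), m ≤ (i : ℕ) → (i : ℕ) < (j : ℕ) → σ j < σ i) ∧
      List.ofFn (fun i => σ i) = A ++ Fin.last p :: B.reverse := by
  set u : List (Fin (p + 1)) := A ++ Fin.last p :: B.reverse with hu
  set P : List (Fin (p + 1)) := A ++ [Fin.last p] with hP
  have huP : u = P ++ B.reverse := by simp [hu, hP]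
  have hlenAB : A.length + B.length = p := by
    have := hAB.length_eq
    simpa [qgBase_length] using this
  have hulen : u.length = p + 1 := by
    simp [hu]
    omega
  have hAle : A.length ≤ p := by simpa [qgBase_length] using hA.length_le
  have hAlt : A.length < p := lt_of_le_of_ne hAle
    (fun h => hAne (hA.eq_of_length (by rw [h, qgBase_length])))
  have hPlen : P.length = A.length + 1 := by simp [hP]
  -- u is a permutation of last :: qgBase
  have huperm : u.Perm (Fin.last p :: qgBase p) := by
    have h1 : u.Perm (Fin.last p :: (A ++ B.reverse)) := by
      rw [hu]; exact List.perm_middle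
    have h2 : (A ++ B.reverse).Perm (A ++ B) := List.Perm.append_left A B.reverse_perm
    exact h1.trans (((h2.trans hAB)).cons _)
  have hunodup : u.Nodup := by
    apply huperm.nodup_iff.2
    apply List.Nodup.cons _ qgBase_nodup
    intro hmem
    exact absurd (qgBase_lt_last _ hmem) (lt_irrefl _)
  -- the permutation
  have hinj : Function.Injective (fun i : Fin (p + 1) => u.get (Fin.cast hulen.symm i)) := by
    intro a b hab
    have := List.nodup_iff_injective_get.1 hunodup hab
    exact Fin.cast_injective _ this
  let σ : Equiv.Perm (Fin (p + 1)) := Equiv.ofBijective _ (Finite.injective_iff_bijective.mp hinj)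
  have hσ : ∀ i : Fin (p + 1), σ i = u.get (Fin.cast hulen.symm i) := fun i => rfl
  have hσ' : ∀ (i : Fin (p + 1)) (h : (i : ℕ) < u.length), σ i = u[(i : ℕ)] := by
    intro i h
    rw [hσ]
    simp [List.get_eq_getElem]
  -- sortedness of P
  have hAsorted : A.Pairwise (· < ·) := qgBase_sorted.sublist hA
  have hBsorted : B.Pairwise (· < ·) := qgBase_sorted.sublist hB
  have hPsorted : P.Pairwise (· < ·) := by
    rw [hP, List.pairwise_append]
    refine ⟨hAsorted, List.pairwise_singleton _ _, ?_⟩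
    intro a ha b hb
    rw [List.mem_singleton] at hb
    subst hb
    exact qgBase_lt_last a (hA.subset ha)
  have hBrev : B.reverse.Pairwise (fun a b => b < a) := by
    rw [List.pairwise_reverse]
    exact hBsorted
  refine ⟨A.length + 1, by omega, by omega, σ, ?_, ?_, ?_, ?_⟩
  · intro i hi
    have hi' : (i : ℕ) = A.length := by omega
    have hlt : (i : ℕ) < u.length := by omega
    rw [hσ' i hlt, getElem_of_append_right hu (by omega) hlt]
    simp [hi']
  · intro i j hij hjm
    have hi : (i : ℕ) < P.length := by omega
    have hj : (j : ℕ) < P.length := by omega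
    have hiu : σ i = P[(i : ℕ)]'hi := by
      rw [hσ' i (by omega), getElem_of_append_left huP hi]
    have hju : σ j = P[(j : ℕ)]'hj := by
      rw [hσ' j (by omega), getElem_of_append_left huP hj]
    rw [hiu, hju]
    exact List.pairwise_iff_getElem.1 hPsorted _ _ hi hj hij
  · intro i j hmi hij
    have hju : (j : ℕ) < u.length := by omega
    have hiu : (i : ℕ) < u.length := by omega
    have hi' : P.length ≤ (i : ℕ) := by omega
    have hj' : P.length ≤ (j : ℕ) := by omega
    have hiB : (i : ℕ) - P.length < B.reverse.length := by
      have : u.length = P.length + B.reverse.length := by rw [huP]; simp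
      omega
    have hjB : (j : ℕ) - P.length < B.reverse.length := by
      have : u.length = P.length + B.reverse.length := by rw [huP]; simp
      omega
    have hgi : σ i = B.reverse[(i : ℕ) - P.length]'hiB := by
      rw [hσ' i hiu, getElem_of_append_right huP hi']
    have hgj : σ j = B.reverse[(j : ℕ) - P.length]'hjB := by
      rw [hσ' j hju, getElem_of_append_right huP hj']
    rw [hgi, hgj]
    exact List.pairwise_iff_getElem.1 hBrev _ _ hiB hjB (by omega)
  · apply List.ext_getElem
    · simp [hulen]
    · intro k hk1 hk2
      rw [List.getElem_ofFn]
      exact hσ' _ (by simpa using hk2)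

end Comb

lemma brWords_decomp {α : Type*} : ∀ (l : List α) (g : α), ∀ u ∈ brWords l g,
    ∃ A B : List α, u = A ++ g :: B.reverse ∧ A.Sublist l ∧ B.Sublist l ∧ (A ++ B).Perm l
  | [], g => by
    intro u hu
    simp only [brWords, List.mem_singleton] at hu
    exact ⟨[], [], by simp [hu], List.Sublist.refl _, List.Sublist.refl _, List.Perm.refl _⟩
  | i :: l, g => by
    intro u hu
    rw [brWords, List.mem_append] at hu
    rcases hu with hu | hu
    · obtain ⟨u', hu', rfl⟩ := List.mem_map.1 hu
      obtain ⟨A, B, rfl, hA, hB, hAB⟩ := brWords_decomp l g u' hu'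
      exact ⟨i :: A, B, rfl, hA.cons₂ i, hB.cons i, hAB.cons i⟩
    · obtain ⟨u', hu', rfl⟩ := List.mem_map.1 hu
      obtain ⟨A, B, rfl, hA, hB, hAB⟩ := brWords_decomp l g u' hu'
      refine ⟨A, i :: B, by simp, hA.cons i, hB.cons₂ i, ?_⟩
      have h1 : (A ++ i :: B).Perm (i :: (A ++ B)) := List.perm_middle
      exact h1.trans (hAB.cons i)

lemma brWords_tail_decomp {α : Type*} : ∀ (l : List α) (g : α), ∀ u ∈ (brWords l g).tail,
    ∃ A B : List α, u = A ++ g :: B.reverse ∧ A.Sublist l ∧ B.Sublist l ∧ (A ++ B).Perm l ∧ A ≠ l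
  | [], g => by
    intro u hu
    simp [brWords] at hu
  | i :: l, g => by
    intro u hu
    have hne : brWords l g ≠ [] := by
      have : ∀ (l' : List α), brWords l' g ≠ [] := by
        intro l'
        induction l' with
        | nil => simp [brWords]
        | cons a l' ih => simp [brWords, ih]
      exact this l
    obtain ⟨h, t, hht⟩ := List.exists_cons_of_ne_nil hne
    have htail : (brWords (i :: l) g).tail = (t.map (i :: ·)) ++ ((brWords l g).map (· ++ [i])) := by
      rw [brWords, hht]
      simp
    rw [htail, List.mem_append] at hu
    rcases hu with hu | hu
    · obtain ⟨u', hu', rfl⟩ := List.mem_map.1 hu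
      have hu'' : u' ∈ (brWords l g).tail := by rw [hht]; exact hu'
      obtain ⟨A, B, rfl, hA, hB, hAB, hAne⟩ := brWords_tail_decomp l g u' hu''
      refine ⟨i :: A, B, rfl, hA.cons₂ i, hB.cons i, hAB.cons i, ?_⟩
      intro hcon
      rw [List.cons_eq_cons] at hcon
      exact hAne hcon.2
    · obtain ⟨u', hu', rfl⟩ := List.mem_map.1 hu
      obtain ⟨A, B, rfl, hA, hB, hAB⟩ := brWords_decomp l g u' hu'
      refine ⟨A, i :: B, by simp, hA.cons i, hB.cons₂ i, ?_, ?_⟩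
      · have h1 : (A ++ i :: B).Perm (i :: (A ++ B)) := List.perm_middle
        exact h1.trans (hAB.cons i)
      · intro hcon
        have := hA.length_le
        rw [hcon] at this
        simp at this

section Bump

set_option linter.unusedSectionVars false

variable {G : Type*} [Group G] [TopologicalSpace G] [IsTopologicalGroup G]
    [LocallyCompactSpace G] [T2Space G] [MeasurableSpace G] [BorelSpace G]
    {K : Type*} [Group K] [TopologicalSpace K] [IsTopologicalGroup K]
    [CompactSpace K] [T2Space K] [MeasurableSpace K] [BorelSpace K]
    [MulDistribMulAction K G] [ContinuousSMul K G]

lemma exists_bump (ν : Measure K) [ν.IsHaarMeasure] [IsProbabilityMeasure ν] (x₀ : G) (W : Set G) (hW : IsOpen W) (horb : ∀ k : K, k • x₀ ∈ W) :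
    ∃ φ : G → ℝ, IsBump φ ∧ (∀ (k : K) (x : G), φ (k • x) = φ x) ∧ 0 < φ x₀ ∧
      ∀ x : G, φ x ≠ 0 → ∀ k : K, k • x ∈ W := by
  classical
  set Ut : Set G := {x | ∀ k : K, k • x ∈ W} with hUt
  have hUtinv : ∀ (k : K) (x : G), x ∈ Ut → k • x ∈ Ut := by
    intro k x hx k'
    rw [← mul_smul]
    exact hx (k' * k)
  have hUtopen : IsOpen Ut := by
    rw [isOpen_iff_forall_mem_open]
    intro x hx
    have hn : IsOpen ((fun kk : K × G => kk.1 • kk.2) ⁻¹' W) := hW.preimage continuous_smul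
    have hp : (Set.univ : Set K) ×ˢ ({x} : Set G) ⊆ (fun kk : K × G => kk.1 • kk.2) ⁻¹' W := by
      rintro ⟨k, y⟩ ⟨-, hy⟩
      rw [Set.mem_singleton_iff] at hy
      subst hy
      exact hx k
    obtain ⟨u, v, hu, hv, huu, hvv, huv⟩ :=
      generalized_tube_lemma isCompact_univ isCompact_singleton hn hp
    refine ⟨v, ?_, hv, hvv rfl⟩
    intro y hy k
    exact huv (Set.mk_mem_prod (huu (Set.mem_univ k)) hy)
  have hx₀ : x₀ ∈ Ut := horb
  obtain ⟨f, hf1, hf0, hfc, hficc⟩ := exists_continuous_one_zero_of_isCompact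
    (isCompact_singleton : IsCompact ({x₀} : Set G)) hUtopen.isClosed_compl
    (Set.disjoint_compl_right_iff_subset.mpr (Set.singleton_subset_iff.mpr hx₀))
  set φ : G → ℝ := fun x => ∫ k : K, f (k⁻¹ • x) ∂ν with hφ
  have hsupp : ∀ x : G, φ x ≠ 0 → ∃ k : K, f (k⁻¹ • x) ≠ 0 := by
    intro x hx
    by_contra hk
    push_neg at hk
    exact hx (by simp [hφ, hk])
  have hsuppUt : ∀ x : G, φ x ≠ 0 → x ∈ Ut := by
    intro x hx
    obtain ⟨k, hk⟩ := hsupp x hx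
    have : k⁻¹ • x ∈ Ut := by
      by_contra hmem
      exact hk (hf0 hmem)
    have := hUtinv k _ this
    rwa [smul_inv_smul] at this
  have hWUt : Ut ⊆ W := fun x hx => by simpa using hx 1
  refine ⟨φ, ⟨?_, ?_, ?_⟩, ?_, ?_, ?_⟩
  · -- continuity
    rw [← continuousOn_univ]
    apply continuousOn_integral_of_compact_support (isCompact_univ : IsCompact (Set.univ : Set K))
    · exact (f.continuous.comp ((continuous_snd.inv).smul continuous_fst)).continuousOn
    · intro p k _ hk
      exact absurd (Set.mem_univ k) hk
  · -- compact support
    apply HasCompactSupport.of_support_subset_isCompact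
      ((isCompact_univ.prod hfc).image (continuous_smul : Continuous fun kk : K × G => kk.1 • kk.2))
    intro x hx
    obtain ⟨k, hk⟩ := hsupp x hx
    exact ⟨(k, k⁻¹ • x), ⟨Set.mem_univ _, subset_tsupport _ hk⟩, smul_inv_smul k x⟩
  · -- nonneg
    exact fun x => integral_nonneg fun k => (hficc _).1
  · -- invariance
    intro k₀ x
    have h1 : φ (k₀ • x) = ∫ k : K, f ((k⁻¹ * k₀) • x) ∂ν := by
      simp only [hφ, mul_smul]
    have h2 := integral_mul_left_eq_self (μ := ν) (fun k : K => f ((k⁻¹ * k₀) • x)) k₀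
    rw [h1, ← h2]
    simp only [hφ]
    congr 1
    funext k
    congr 2
    group
  · -- positivity at x₀
    have hψcont : Continuous fun k : K => f (k⁻¹ • x₀) :=
      f.continuous.comp (continuous_inv.smul continuous_const)
    have hψint : Integrable (fun k : K => f (k⁻¹ • x₀)) ν := by
      apply hψcont.integrable_of_hasCompactSupport
      exact IsCompact.of_isClosed_subset isCompact_univ (isClosed_tsupport _) (Set.subset_univ _)
    rw [hφ]
    rw [integral_pos_iff_support_of_nonneg_ae
        (Filter.Eventually.of_forall fun k => (hficc _).1) hψint]
    have hopen : IsOpen (Function.support fun k : K => f (k⁻¹ • x₀)) := by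
      have : Function.support (fun k : K => f (k⁻¹ • x₀))
          = (fun k : K => f (k⁻¹ • x₀)) ⁻¹' {0}ᶜ := by
        ext k; simp [Function.mem_support]
      rw [this]
      exact hψcont.isOpen_preimage _ isOpen_compl_singleton
    apply hopen.measure_pos ν
    refine ⟨1, ?_⟩
    have h1 : f x₀ = 1 := hf1 rfl
    simp only [Function.mem_support, inv_one, one_smul, h1]
    norm_num
  · -- support in W
    intro x hx k
    exact hWUt (hUtinv k x (hsuppUt x hx))
end Bump

/-- If `(G, K)` is a quasi-Gelfand pair of order `p`, then for all
`x₁, …, x_{p+1} ∈ G` (indexed here by `Fin (p+1)`, i.e. `0, …, p`) there exist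
`m ∈ {1, …, p}` and a permutation `σ` of the indices with `σ(m) = p+1` (in `1`-based
notation), `σ(1) < ⋯ < σ(m)` and `σ(m+1) > ⋯ > σ(p+1)`, such that
`x₁x₂⋯x_{p+1} ∈ (K·x_{σ(1)})(K·x_{σ(2)})⋯(K·x_{σ(p+1)})`. -/
theorem quasiGelfand_orbit_product
    {G : Type*} [Group G] [TopologicalSpace G] [IsTopologicalGroup G]
    [LocallyCompactSpace G] [T2Space G] [MeasurableSpace G] [BorelSpace G]
    (μ : Measure G) [μ.IsHaarMeasure]
    {K : Type*} [Group K] [TopologicalSpace K] [IsTopologicalGroup K]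
    [CompactSpace K] [T2Space K] [MeasurableSpace K] [BorelSpace K]
    (ν : Measure K) [ν.IsHaarMeasure] [IsProbabilityMeasure ν]
    [MulDistribMulAction K G] [ContinuousSMul K G] [SMulInvariantMeasure K G μ]
    (p : ℕ) (hp : 1 ≤ p)
    -- every iterated bracket of `p + 1` K-invariant integrable functions vanishes a.e.
    (hnil : ∀ l : List (G → ℂ), l.length = p →
      (∀ f ∈ l, Integrable f μ ∧ ∀ (k : K) (x : G), f (k • x) = f x) →
      ∀ g : G → ℂ, Integrable g μ → (∀ (k : K) (x : G), g (k • x) = g x) →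
      iterBracket μ l g =ᵐ[μ] 0)
    -- some iterated bracket of `p` K-invariant integrable functions does not vanish a.e.
    (hstep : ∃ l : List (G → ℂ), ∃ g : G → ℂ, l.length = p - 1 ∧
      (∀ f ∈ l, Integrable f μ ∧ ∀ (k : K) (x : G), f (k • x) = f x) ∧
      Integrable g μ ∧ (∀ (k : K) (x : G), g (k • x) = g x) ∧
      ¬ (iterBracket μ l g =ᵐ[μ] 0)) :
    ∀ x : Fin (p + 1) → G, ∃ m : ℕ, 1 ≤ m ∧ m ≤ p ∧ ∃ σ : Equiv.Perm (Fin (p + 1)),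
      -- the (1-based) position `m` is sent to the (1-based) index `p+1`:
      (∀ i : Fin (p + 1), (i : ℕ) + 1 = m → σ i = Fin.last p) ∧
      -- `σ(1) < σ(2) < ⋯ < σ(m)`:
      (∀ i j : Fin (p + 1), (i : ℕ) < (j : ℕ) → (j : ℕ) < m → σ i < σ j) ∧
      -- `σ(m+1) > σ(m+2) > ⋯ > σ(p+1)`:
      (∀ i j : Fin (p + 1), m ≤ (i : ℕ) → (i : ℕ) < (j : ℕ) → σ j < σ i) ∧
      (List.ofFn x).prod ∈
        (List.ofFn fun i : Fin (p + 1) => Set.range fun k : K => k • x (σ i)).prod := by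
  intro x
  by_contra hcon
  classical
  set z : G := (List.ofFn x).prod with hz
  set Orb : Fin (p + 1) → Set G := fun j => Set.range fun k : K => k • x j with hOrb
  set base : List (Fin (p + 1)) := qgBase p with hbase
  set glast : Fin (p + 1) := Fin.last p with hglast
  have hbad : ∀ u ∈ (brWords base glast).tail, z ∉ (u.map Orb).prod := by
    intro u hu hzmem
    obtain ⟨A, B, rfl, hA, hB, hAB, hAne⟩ := brWords_tail_decomp base glast u hu
    obtain ⟨m, hm1, hm2, σ, h1, h2, h3, hofn⟩ := exists_perm_of_word A B hA hB hAB hAne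
    apply hcon
    refine ⟨m, hm1, hm2, σ, h1, h2, h3, ?_⟩
    have h4 : (List.ofFn fun i => Set.range fun k : K => k • x (σ i))
        = (A ++ glast :: B.reverse).map Orb := by
      rw [← hofn, List.map_ofFn]
      rfl
    rw [h4]
    exact hzmem
  have hOrbC : ∀ j, IsCompact (Orb j) :=
    fun j => isCompact_range (continuous_id.smul continuous_const)
  obtain ⟨U, hU, hUbad⟩ := tube_words Orb hOrbC z ((brWords base glast).tail) hbad
  have hLex : ∀ j, ∃ Lc : Set G, IsCompact Lc ∧ Orb j ⊆ interior Lc ∧ Lc ⊆ U j :=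
    fun j => exists_compact_between (hOrbC j) (hU j).1 (hU j).2
  choose L hLC hLint hLU using hLex
  have hbex : ∀ j, ∃ φ : G → ℝ, IsBump φ ∧ (∀ (k : K) (xx : G), φ (k • xx) = φ xx) ∧
      0 < φ (x j) ∧ ∀ xx : G, φ xx ≠ 0 → ∀ k : K, k • xx ∈ interior (L j) := by
    intro j
    apply exists_bump ν (x j) (interior (L j)) isOpen_interior
    intro k
    exact hLint j ⟨k, rfl⟩
  choose φ hbump hinv hpos hsupp using hbex
  have hsuppL : ∀ j, Function.support (φ j) ⊆ L j := by
    intro j xx hxx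
    have h1 := hsupp j xx hxx 1
    rw [one_smul] at h1
    exact interior_subset h1
  set F : Fin (p + 1) → G → ℂ := fun j => fun t => ((φ j t : ℝ) : ℂ) with hF
  have hnice : ∀ j, Integrable (F j) μ ∧ ∀ (k : K) (xx : G), F j (k • xx) = F j xx := by
    intro j
    constructor
    · apply Continuous.integrable_of_hasCompactSupport
      · exact Complex.continuous_ofReal.comp (hbump j).1
      · exact ((hbump j).2.1).comp_left (g := fun r : ℝ => (r : ℂ)) (by simp)
    · intro k xx
      simp only [hF]
      rw [hinv j k xx]
  have hae := hnil (base.map fun j => F j) (by simp [hbase, qgBase_length])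
      (fun f hf => by obtain ⟨j, _, rfl⟩ := List.mem_map.1 hf; exact hnice j)
      (F glast) (hnice glast).1 (hnice glast).2
  have hbridge : iterBracket μ (base.map fun j => F j) (F glast)
      = fun w => ((rbracket μ (base.map fun j => φ j) (φ glast) w : ℝ) : ℂ) := by
    have hmm : (base.map fun j => F j)
        = (base.map fun j => φ j).map (fun f => fun t => ((f t : ℝ) : ℂ)) := by
      rw [List.map_map]
      rfl
    rw [hmm]
    exact iterBracket_ofReal μ _ _
  set O : Set G := {w : G | ∀ u ∈ (brWords base glast).tail, w ∉ (u.map L).prod} with hO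
  have hOopen : IsOpen O := isOpen_avoid L hLC _
  have hzO : z ∈ O := by
    intro u hu hmem
    exact hUbad u hu (listSet_prod_mono L U u (fun j _ => hLU j) hmem)
  set t0 : G → ℝ := rchain μ (base.map fun j => φ j) (φ glast) with ht0
  have hchainB : IsBump t0 :=
    rchain_isBump μ _ (fun f hf => by obtain ⟨j, _, rfl⟩ := List.mem_map.1 hf; exact hbump j)
      _ (hbump glast)
  have ht0z : 0 < t0 z := by
    have hzeq : z = ((base.map fun j => x j).prod) * x glast := by
      rw [hz, List.ofFn_succ', List.prod_concat]
      congr 1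
      rw [hbase, qgBase, List.map_map, List.ofFn_eq_map]
      rfl
    rw [hzeq, ht0]
    exact rchain_pos μ _ _ (forall₂_map_map _ _ _ base (fun j _ => hpos j))
      (fun f hf => by obtain ⟨j, _, rfl⟩ := List.mem_map.1 hf; exact hbump j)
      (φ glast) (x glast) (hbump glast) (hpos glast)
  have hVopen : IsOpen (O ∩ {w | 0 < t0 w}) := hOopen.inter (isOpen_lt continuous_const hchainB.1)
  have heqOn : ∀ w ∈ O, rbracket μ (base.map fun j => φ j) (φ glast) w = t0 w := by
    intro w hw
    exact rbracket_eq_rchain μ (fun j => φ j) L hsuppL base glast w hw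
  have hsubset : (O ∩ {w | 0 < t0 w})
      ⊆ {w | iterBracket μ (base.map fun j => F j) (F glast) w ≠ 0} := by
    rintro w ⟨hw1, hw2⟩ h0
    rw [hbridge] at h0
    have h0' : rbracket μ (base.map fun j => φ j) (φ glast) w = 0 := by
      have := h0
      simp only at this
      exact_mod_cast this
    rw [heqOn w hw1] at h0'
    exact absurd h0' (ne_of_gt hw2)
  have hposm : 0 < μ (O ∩ {w | 0 < t0 w}) := hVopen.measure_pos μ ⟨z, hzO, ht0z⟩
  have hnull : μ {w | iterBracket μ (base.map fun j => F j) (F glast) w ≠ 0} = 0 := by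
    have h5 := hae
    rw [Filter.EventuallyEq, ae_iff] at h5
    simpa using h5
  exact (hposm.ne' (measure_mono_null hsubset hnull))
end

section
/- Let G be a locally compact Hausdorff topological group with a left Haar measure μ. If f⋆g = g⋆f (μ-almost everywhere) for all continuous compactly supported functions f, g : G → ℂ, then G is commutative. -/
open MeasureTheory

/-- A bump function at a point, supported in a given open neighborhood. -/
lemma exists_bump' {X : Type*} [TopologicalSpace X] [T2Space X] [LocallyCompactSpace X]
    (a : X) {U : Set X} (hU : IsOpen U) (ha : a ∈ U) :
    ∃ f : X → ℝ, Continuous f ∧ HasCompactSupport f ∧ f a = 1 ∧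
      (∀ x, x ∉ U → f x = 0) ∧ ∀ x, 0 ≤ f x ∧ f x ≤ 1 := by
  obtain ⟨f, h1, h0, hc, hbd⟩ := exists_continuous_one_zero_of_isCompact
    (isCompact_singleton (x := a)) hU.isClosed_compl
    (by simpa [Set.disjoint_singleton_left] using ha)
  exact ⟨f, f.continuous, hc, h1 rfl, fun x hx => h0 hx,
    fun x => ⟨(hbd x).1, (hbd x).2⟩⟩

/-- Let `G` be a locally compact Hausdorff topological group with left Haar measure
`μ`. If `f ⋆ g = g ⋆ f` μ-a.e. for all continuous compactly supported `f, g : G → ℂ`,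
then `G` is commutative. -/
theorem commutative_of_convolution_comm
    {G : Type*} [Group G] [TopologicalSpace G] [IsTopologicalGroup G]
    [LocallyCompactSpace G] [T2Space G] [MeasurableSpace G] [BorelSpace G]
    (μ : Measure G) [μ.IsHaarMeasure]
    (h : ∀ f g : G → ℂ, Continuous f → HasCompactSupport f →
      Continuous g → HasCompactSupport g →
      convolution' μ f g =ᵐ[μ] convolution' μ g f) :
    ∀ a b : G, a * b = b * a := by
  intro a b
  by_contra hab
  -- separate a*b and b*a by disjoint open sets
  obtain ⟨O1, O2, hO1, hO2, hab1, hba2, hdisj⟩ := t2_separation hab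
  -- find opens B ∋ b, A ∋ a with B * A ⊆ O2
  have hcont : ContinuousAt (fun p : G × G => p.1 * p.2) (b, a) :=
    continuous_mul.continuousAt
  have h2 : {p : G × G | p.1 * p.2 ∈ O2} ∈ nhds (b, a) := hcont (hO2.mem_nhds hba2)
  rw [nhds_prod_eq, Filter.mem_prod_iff] at h2
  obtain ⟨B0, hB0, A0, hA0, hBA⟩ := h2
  obtain ⟨B, hBsub, hBopen, hbB⟩ := mem_nhds_iff.mp hB0
  obtain ⟨A, hAsub, hAopen, haA⟩ := mem_nhds_iff.mp hA0
  -- bump functions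
  obtain ⟨F, hFc, hFsupp, hFa, hF0, hFbd⟩ := exists_bump' a hAopen haA
  obtain ⟨Gb, hGc, hGsupp, hGb, hG0, hGbd⟩ := exists_bump' b hBopen hbB
  set f : G → ℂ := fun x => (F x : ℂ) with hf_def
  set g : G → ℂ := fun x => (Gb x : ℂ) with hg_def
  have hf : Continuous f := Complex.continuous_ofReal.comp hFc
  have hg : Continuous g := Complex.continuous_ofReal.comp hGc
  have hfsupp : HasCompactSupport f := hFsupp.comp_left (g := (fun r : ℝ => (r : ℂ))) rfl
  have hgsupp : HasCompactSupport g := hGsupp.comp_left (g := (fun r : ℝ => (r : ℂ))) rfl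
  -- sets where the bumps are > 1/2
  set U' : Set G := F ⁻¹' Set.Ioi (1/2 : ℝ) with hU'_def
  have hU'open : IsOpen U' := isOpen_Ioi.preimage hFc
  have haU' : a ∈ U' := by simp [hU'_def, hFa]; norm_num
  set V' : Set G := Gb ⁻¹' Set.Ioi (1/2 : ℝ) with hV'_def
  have hV'open : IsOpen V' := isOpen_Ioi.preimage hGc
  have hbV' : b ∈ V' := by simp [hV'_def, hGb]; norm_num
  -- neighborhoods W ∋ a, X1 ∋ a*b with y ∈ W, x ∈ X1 → y⁻¹ * x ∈ V'
  have hc2 : ContinuousAt (fun p : G × G => p.1⁻¹ * p.2) (a, a * b) :=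
    ((continuous_inv.comp continuous_fst).mul continuous_snd).continuousAt
  have h3 : {p : G × G | p.1⁻¹ * p.2 ∈ V'} ∈ nhds (a, a * b) := by
    apply hc2
    simpa using hV'open.mem_nhds hbV'
  rw [nhds_prod_eq, Filter.mem_prod_iff] at h3
  obtain ⟨W0, hW0, X0, hX0, hWX⟩ := h3
  obtain ⟨W1, hW1sub, hW1open, haW1⟩ := mem_nhds_iff.mp hW0
  obtain ⟨X1, hX1sub, hX1open, habX1⟩ := mem_nhds_iff.mp hX0
  -- compact neighborhood of a to ensure finite measure
  obtain ⟨K, hKcomp, hKnhds⟩ := exists_compact_mem_nhds a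
  set W : Set G := W1 ∩ U' ∩ interior K with hW_def
  have hWopen : IsOpen W := (hW1open.inter hU'open).inter isOpen_interior
  have haW : a ∈ W := ⟨⟨haW1, haU'⟩, mem_interior_iff_mem_nhds.mpr hKnhds⟩
  have hWfin : μ W < ⊤ :=
    lt_of_le_of_lt (measure_mono (Set.inter_subset_right.trans interior_subset))
      hKcomp.measure_lt_top
  have hWpos : 0 < μ W := hWopen.measure_pos μ ⟨a, haW⟩
  -- the key claim: on X1 ∩ O1, the two convolutions differ
  have claim : ∀ x ∈ X1 ∩ O1, convolution' μ f g x ≠ convolution' μ g f x := by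
    rintro x ⟨hxX1, hxO1⟩
    -- g ⋆ f vanishes at x
    have hgf : convolution' μ g f x = 0 := by
      have : ∀ y, g y * f (y⁻¹ * x) = 0 := by
        intro y
        by_cases hy : Gb y = 0
        · simp [hg_def, hy]
        by_cases hyx : F (y⁻¹ * x) = 0
        · simp [hf_def, hyx]
        exfalso
        have hyB : y ∈ B := by
          by_contra hc; exact hy (hG0 y hc)
        have hyxA : y⁻¹ * x ∈ A := by
          by_contra hc; exact hyx (hF0 _ hc)
        have : x ∈ O2 := by
          have := hBA (Set.mk_mem_prod (hBsub hyB) (hAsub hyxA))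
          simpa using this
        exact Set.disjoint_left.mp hdisj hxO1 this
      simp only [convolution']
      simp [this]
    -- f ⋆ g is positive (as a real number) at x
    have key : ∀ y ∈ W, (1/2 : ℝ) * (1/2) ≤ F y * Gb (y⁻¹ * x) := by
      intro y hy
      have h1 : (1/2 : ℝ) < F y := hy.1.2
      have h2 : y⁻¹ * x ∈ V' := hWX (Set.mk_mem_prod (hW1sub hy.1.1) (hX1sub hxX1))
      have h2' : (1/2 : ℝ) < Gb (y⁻¹ * x) := h2
      exact mul_le_mul h1.le h2'.le (by norm_num) (hFbd y).1
    have hintF : Integrable (fun y => F y * Gb (y⁻¹ * x)) μ := by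
      apply Continuous.integrable_of_hasCompactSupport
      · exact hFc.mul (hGc.comp ((continuous_inv.mul continuous_const)))
      · apply HasCompactSupport.mul_right hFsupp
    have hnonneg : ∀ y, 0 ≤ F y * Gb (y⁻¹ * x) := fun y =>
      mul_nonneg (hFbd y).1 (hGbd _).1
    have hlow : (1/2 : ℝ) * (1/2) * (μ W).toReal ≤ ∫ y, F y * Gb (y⁻¹ * x) ∂μ := by
      have hWm : MeasurableSet W := hWopen.measurableSet
      have h1 : ∫ y in W, ((1/2 : ℝ) * (1/2)) ∂μ ≤ ∫ y in W, F y * Gb (y⁻¹ * x) ∂μ := by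
        apply setIntegral_mono_on (integrableOn_const hWfin.ne)
          (hintF.integrableOn) hWm
        exact key
      have h2 : ∫ y in W, F y * Gb (y⁻¹ * x) ∂μ ≤ ∫ y, F y * Gb (y⁻¹ * x) ∂μ :=
        setIntegral_le_integral hintF (Filter.Eventually.of_forall hnonneg)
      calc (1/2 : ℝ) * (1/2) * (μ W).toReal
          = ∫ _ in W, ((1/2 : ℝ) * (1/2)) ∂μ := by
            rw [setIntegral_const]; rw [smul_eq_mul, mul_comm]; rfl
        _ ≤ _ := h1.trans h2
    have hpos : 0 < ∫ y, F y * Gb (y⁻¹ * x) ∂μ := by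
      refine lt_of_lt_of_le ?_ hlow
      have : 0 < (μ W).toReal := ENNReal.toReal_pos hWpos.ne' hWfin.ne
      positivity
    have hfg : convolution' μ f g x = ((∫ y, F y * Gb (y⁻¹ * x) ∂μ : ℝ) : ℂ) := by
      simp only [convolution', hf_def, hg_def]
      rw [show (((∫ y, F y * Gb (y⁻¹ * x) ∂μ : ℝ)) : ℂ) = ∫ y, ((F y * Gb (y⁻¹ * x) : ℝ) : ℂ) ∂μ from (integral_ofReal (𝕜 := ℂ)).symm]
      simp [Complex.ofReal_mul]
    rw [hfg, hgf]
    simp only [ne_eq, Complex.ofReal_eq_zero]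
    exact hpos.ne'
  -- contradiction with a.e. equality
  have hae := h f g hf hfsupp hg hgsupp
  have hnull : μ {x | convolution' μ f g x ≠ convolution' μ g f x} = 0 := ae_iff.mp hae
  have hsub : X1 ∩ O1 ⊆ {x | convolution' μ f g x ≠ convolution' μ g f x} := fun x hx => claim x hx
  have : μ (X1 ∩ O1) = 0 := measure_mono_null hsub hnull
  exact (((hX1open.inter hO1).measure_pos μ ⟨a * b, habX1, hab1⟩).ne' this)
end
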